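/- Let n ≥ 2 and set f(q) := Σ_{π∈S_n} q^{inv(π)} and g(q) := q·f′(q)/f(q) for q > 0. Then the function θ ↦ g(e^{−θ}) is strictly decreasing and strictly convex on (0, ∞); consequently its inverse function, and hence the map m ↦ −log g⁻¹(m), is strictly convex and strictly decreasing on the range of g(e^{−·}). -/

import Mathlib

open scoped BigOperators


/-- Number of inversions of a permutation of `Fin n`. -/
def numInv {n : ℕ} (π : Equiv.Perm (Fin n)) : ℕ :=
  (Finset.univ.filter fun p : Fin n × Fin n => p.1 < p.2 ∧ π p.2 < π p.1).card

/-- Remove the last position of a permutation of `Fin (n+1)`. -/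
def stripLast {n : ℕ} (σ : Equiv.Perm (Fin (n + 1))) : Equiv.Perm (Fin n) :=
  (finSuccAboveEquiv (Fin.last n)).trans
    ((σ.subtypeEquiv fun a => not_congr (σ.apply_eq_iff_eq.symm.trans Iff.rfl) |>.symm
        |>.symm).trans
      (finSuccAboveEquiv (σ (Fin.last n))).symm)

lemma succAbove_finSuccAboveEquiv_symm {n : ℕ} (p : Fin (n + 1)) (x : {x : Fin (n+1) // x ≠ p}) :
    p.succAbove ((finSuccAboveEquiv p).symm x) = x := by
  have h := (finSuccAboveEquiv p).apply_symm_apply x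
  rw [finSuccAboveEquiv_apply] at h
  exact congrArg Subtype.val h

lemma stripLast_spec {n : ℕ} (σ : Equiv.Perm (Fin (n + 1))) (i : Fin n) :
    (σ (Fin.last n)).succAbove (stripLast σ i) = σ (Fin.castSucc i) := by
  simp only [stripLast, Equiv.trans_apply, Equiv.subtypeEquiv_apply, finSuccAboveEquiv_apply,
    Fin.succAbove_last]
  exact succAbove_finSuccAboveEquiv_symm _ _

lemma stripLast_lt_iff {n : ℕ} (σ : Equiv.Perm (Fin (n + 1))) (i j : Fin n) :
    stripLast σ i < stripLast σ j ↔ σ (Fin.castSucc i) < σ (Fin.castSucc j) := by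
  rw [← stripLast_spec σ i, ← stripLast_spec σ j, Fin.succAbove_lt_succAbove_iff]

lemma numInv_succ {n : ℕ} (σ : Equiv.Perm (Fin (n + 1))) :
    numInv σ = (n - (σ (Fin.last n) : ℕ)) + numInv (stripLast σ) := by
  classical
  set S : Finset (Fin (n+1) × Fin (n+1)) :=
    Finset.univ.filter fun p => p.1 < p.2 ∧ σ p.2 < σ p.1 with hS
  have hsplit := Finset.card_filter_add_card_filter_not
    (s := S) (p := fun p => p.2 = Fin.last n)
  have h1 : (S.filter fun p => p.2 = Fin.last n).card = n - (σ (Fin.last n) : ℕ) := by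
    rw [show (n - (σ (Fin.last n) : ℕ)) = (Finset.Ioi (σ (Fin.last n))).card by
      rw [Fin.card_Ioi]; omega]
    apply Finset.card_bij (fun p _ => σ p.1)
    · intro a ha
      simp only [hS, Finset.mem_filter, Finset.mem_univ, true_and] at ha
      rw [Finset.mem_Ioi, ← ha.2]
      exact ha.1.2
    · intro a ha b hb hab
      simp only [hS, Finset.mem_filter, Finset.mem_univ, true_and] at ha hb
      have h1 := σ.injective hab
      exact Prod.ext h1 (ha.2.trans hb.2.symm)
    · intro y hy
      rw [Finset.mem_Ioi] at hy
      refine ⟨(σ.symm y, Fin.last n), ?_, by simp⟩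
      simp only [hS, Finset.mem_filter, Finset.mem_univ, true_and, Equiv.apply_symm_apply]
      have hne : σ.symm y ≠ Fin.last n := by
        intro hEq
        rw [← hEq, Equiv.apply_symm_apply] at hy
        exact lt_irrefl _ hy
      exact ⟨⟨lt_of_le_of_ne (Fin.le_last _) hne, hy⟩, trivial⟩
  have h2 : (S.filter fun p => ¬ p.2 = Fin.last n).card = numInv (stripLast σ) := by
    rw [numInv]
    symm
    refine Finset.card_bij (fun p _ => (Fin.castSucc p.1, Fin.castSucc p.2)) ?_ ?_ ?_
    · intro a ha
      simp only [Finset.mem_filter, Finset.mem_univ, true_and] at ha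
      simp only [hS, Finset.mem_filter, Finset.mem_univ, true_and]
      refine ⟨⟨by exact_mod_cast ha.1, ?_⟩, Fin.ne_of_lt (Fin.castSucc_lt_last _)⟩
      rw [← stripLast_spec σ a.1, ← stripLast_spec σ a.2, Fin.succAbove_lt_succAbove_iff]
      exact ha.2
    · intro a ha b hb hab
      have h1 : a.1 = b.1 := Fin.castSucc_injective n (congrArg Prod.fst hab)
      have h2 : a.2 = b.2 := Fin.castSucc_injective n (congrArg Prod.snd hab)
      exact Prod.ext h1 h2
    · intro b hb
      simp only [hS, Finset.mem_filter, Finset.mem_univ, true_and] at hb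
      obtain ⟨⟨hlt, hinv⟩, hne⟩ := hb
      have hb2 : b.2 ≠ Fin.last n := hne
      have hb1 : b.1 ≠ Fin.last n := Fin.ne_of_lt (lt_of_lt_of_le hlt (Fin.le_last _))
      refine ⟨(b.1.castPred hb1, b.2.castPred hb2), ?_, by simp⟩
      simp only [Finset.mem_filter, Finset.mem_univ, true_and]
      constructor
      · rw [← Fin.castSucc_lt_castSucc_iff]
        simpa using hlt
      · rw [stripLast_lt_iff]
        simpa using hinv
  rw [numInv, ← hS, ← hsplit, h1, h2]

lemma phi_bijective {n : ℕ} :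
    Function.Bijective (fun σ : Equiv.Perm (Fin (n + 1)) =>
      (σ (Fin.last n), stripLast σ)) := by
  rw [Fintype.bijective_iff_injective_and_card]
  constructor
  · intro σ τ hEq
    have h1 : σ (Fin.last n) = τ (Fin.last n) := congrArg Prod.fst hEq
    have h2 : stripLast σ = stripLast τ := congrArg Prod.snd hEq
    ext x
    rcases Fin.eq_castSucc_or_eq_last x with ⟨i, rfl⟩ | rfl
    · rw [← stripLast_spec σ i, ← stripLast_spec τ i, h1, h2]
    · exact congrArg Fin.val h1
  · simp [Fintype.card_perm, Nat.factorial_succ]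

lemma sum_pow_numInv (n : ℕ) (q : ℝ) :
    ∑ π : Equiv.Perm (Fin n), q ^ numInv π
      = ∏ j ∈ Finset.range n, ∑ i ∈ Finset.range (j + 1), q ^ i := by
  induction n with
  | zero => simp [numInv]
  | succ n ih =>
    have key := Fintype.sum_bijective _ (phi_bijective (n := n))
      (fun σ => q ^ numInv σ)
      (fun pe => q ^ ((n - (pe.1 : ℕ)) + numInv pe.2))
      (fun σ => by simp only [numInv_succ σ])
    rw [key, Fintype.sum_prod_type]
    simp only [pow_add]
    rw [← Finset.sum_mul_sum]
    have hfst : ∑ p : Fin (n+1), q ^ (n - (p : ℕ)) = ∑ i ∈ Finset.range (n+1), q ^ i := by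
      rw [Fin.sum_univ_eq_sum_range (fun i => q ^ (n - i)) (n+1), ← Finset.sum_range_reflect]
      apply Finset.sum_congr rfl
      intro i hi
      rw [Finset.mem_range] at hi
      congr 1
      omega
    rw [hfst, ih, Finset.prod_range_succ]
    ring

/-- If `G 0 = 0` and `G' > 0` on `(0,∞)` then `G > 0` on `(0,∞)`. -/
lemma pos_of_hasDerivAt_pos {G G' : ℝ → ℝ} (hd : ∀ x, HasDerivAt G (G' x) x)
    (h0 : G 0 = 0) (hp : ∀ x, 0 < x → 0 < G' x) : ∀ x, 0 < x → 0 < G x := by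
  have mono : StrictMonoOn G (Set.Ici 0) := by
    apply strictMonoOn_of_deriv_pos (convex_Ici 0)
      (fun x _ => (hd x).continuousAt.continuousWithinAt)
    intro x hx
    rw [interior_Ici] at hx
    rw [(hd x).deriv]
    exact hp x hx
  intro x hx
  have := mono (Set.self_mem_Ici) (Set.mem_Ici.2 hx.le) hx
  rwa [h0] at this

lemma sinh_lt_self_mul_cosh {x : ℝ} (hx : 0 < x) : Real.sinh x < x * Real.cosh x := by
  have key := pos_of_hasDerivAt_pos (G := fun x => x * Real.cosh x - Real.sinh x)
    (G' := fun x => x * Real.sinh x)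
    (fun x => by
      have h := ((hasDerivAt_id' x).fun_mul (Real.hasDerivAt_cosh x)).fun_sub (Real.hasDerivAt_sinh x)
      refine h.congr_deriv ?_
      ring)
    (by simp)
    (fun x hx => mul_pos hx (Real.sinh_pos_iff.2 hx))
  have := key x hx
  linarith

lemma N_pos {x : ℝ} (hx : 0 < x) :
    0 < 3 * x * Real.cosh x ^ 2 - x * Real.sinh x ^ 2 - 3 * Real.sinh x * Real.cosh x := by
  have key := pos_of_hasDerivAt_pos
    (G := fun x => 3 * x * Real.cosh x ^ 2 - x * Real.sinh x ^ 2 - 3 * Real.sinh x * Real.cosh x)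
    (G' := fun x => 4 * Real.sinh x * (x * Real.cosh x - Real.sinh x))
    (fun x => by
      have h1 : HasDerivAt (fun x : ℝ => 3 * x * Real.cosh x ^ 2)
          (3 * Real.cosh x ^ 2 + 3 * x * (2 * Real.cosh x * Real.sinh x)) x := by
        have := (((hasDerivAt_id' x).const_mul 3).fun_mul ((Real.hasDerivAt_cosh x).fun_pow 2))
        refine this.congr_deriv ?_
        simp
      have h2 : HasDerivAt (fun x : ℝ => x * Real.sinh x ^ 2)
          (Real.sinh x ^ 2 + x * (2 * Real.sinh x * Real.cosh x)) x := by
        have := (hasDerivAt_id' x).fun_mul ((Real.hasDerivAt_sinh x).fun_pow 2)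
        refine this.congr_deriv ?_
        simp
      have h3 : HasDerivAt (fun x : ℝ => 3 * Real.sinh x * Real.cosh x)
          (3 * Real.cosh x * Real.cosh x + 3 * Real.sinh x * Real.sinh x) x := by
        have := (((Real.hasDerivAt_sinh x).const_mul 3)).fun_mul (Real.hasDerivAt_cosh x)
        exact this
      have h := (h1.fun_sub h2).fun_sub h3
      refine h.congr_deriv ?_
      ring)
    (by simp)
    (fun x hx => by
      have h1 := Real.sinh_pos_iff.2 hx
      have h2 := sinh_lt_self_mul_cosh hx
      nlinarith)
  exact key x hx

lemma Q_strictAnti :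
    StrictAntiOn (fun x : ℝ => x ^ 3 * Real.cosh x / Real.sinh x ^ 3) (Set.Ioi 0) := by
  have hderiv : ∀ x ∈ Set.Ioi (0:ℝ), HasDerivAt (fun x : ℝ => x ^ 3 * Real.cosh x / Real.sinh x ^ 3)
      (((3 * x ^ 2 * Real.cosh x + x ^ 3 * Real.sinh x) * Real.sinh x ^ 3
        - x ^ 3 * Real.cosh x * (3 * Real.sinh x ^ 2 * Real.cosh x)) / (Real.sinh x ^ 3) ^ 2) x := by
    intro x hx
    have hs : Real.sinh x ≠ 0 := (Real.sinh_pos_iff.2 hx).ne'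
    have hnum : HasDerivAt (fun x : ℝ => x ^ 3 * Real.cosh x)
        (3 * x ^ 2 * Real.cosh x + x ^ 3 * Real.sinh x) x := by
      have := (hasDerivAt_pow 3 x).fun_mul (Real.hasDerivAt_cosh x)
      refine this.congr_deriv (by norm_num)
    have hden : HasDerivAt (fun x : ℝ => Real.sinh x ^ 3)
        (3 * Real.sinh x ^ 2 * Real.cosh x) x := by
      have := (Real.hasDerivAt_sinh x).fun_pow 3
      refine this.congr_deriv (by norm_num)
    exact hnum.div hden (pow_ne_zero 3 hs)
  apply strictAntiOn_of_deriv_neg (convex_Ioi 0)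
    (fun x hx => (hderiv x hx).continuousAt.continuousWithinAt)
  intro x hx
  rw [interior_Ioi] at hx
  rw [(hderiv x hx).deriv]
  have hs := Real.sinh_pos_iff.2 hx
  have hN := N_pos hx
  apply div_neg_of_neg_of_pos
  · have key : (3 * x ^ 2 * Real.cosh x + x ^ 3 * Real.sinh x) * Real.sinh x ^ 3
        - x ^ 3 * Real.cosh x * (3 * Real.sinh x ^ 2 * Real.cosh x)
        = -(Real.sinh x ^ 2 * x ^ 2
            * (3 * x * Real.cosh x ^ 2 - x * Real.sinh x ^ 2
              - 3 * Real.sinh x * Real.cosh x)) := by ring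
    rw [key]
    exact neg_neg_of_pos (mul_pos (mul_pos (pow_pos hs 2) (pow_pos hx 2)) hN)
  · positivity

lemma mul_sinh_le (k : ℕ) {x : ℝ} (hx : 0 < x) : (k : ℝ) * Real.sinh x ≤ Real.sinh (k * x) := by
  induction k with
  | zero => simp
  | succ k ih =>
    have hadd : Real.sinh ((k:ℝ) * x + x) =
        Real.sinh ((k:ℝ) * x) * Real.cosh x + Real.cosh ((k:ℝ) * x) * Real.sinh x :=
      Real.sinh_add _ _
    have h1 : Real.sinh ((k:ℝ) * x) * Real.cosh x ≥ Real.sinh ((k:ℝ) * x) := by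
      have hsk : 0 ≤ Real.sinh ((k:ℝ) * x) := by
        rcases Nat.eq_zero_or_pos k with rfl | hk
        · simp
        · exact (Real.sinh_pos_iff.2 (by positivity)).le
      nlinarith [Real.one_le_cosh x]
    have h2 : Real.cosh ((k:ℝ) * x) * Real.sinh x ≥ Real.sinh x := by
      have := Real.one_le_cosh ((k:ℝ) * x)
      nlinarith [Real.sinh_pos_iff.2 hx]
    push_cast
    calc ((k:ℝ) + 1) * Real.sinh x = (k:ℝ) * Real.sinh x + Real.sinh x := by ring
    _ ≤ Real.sinh ((k:ℝ) * x) + Real.sinh x := by linarith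
    _ ≤ Real.sinh ((k:ℝ) * x) * Real.cosh x + Real.cosh ((k:ℝ) * x) * Real.sinh x := by linarith
    _ = Real.sinh (((k:ℝ) + 1) * x) := by rw [← hadd]; ring_nf

lemma mul_sinh_lt {k : ℕ} (hk : 2 ≤ k) {x : ℝ} (hx : 0 < x) :
    (k : ℝ) * Real.sinh x < Real.sinh (k * x) := by
  obtain ⟨m, rfl⟩ : ∃ m, k = m + 1 := ⟨k - 1, by omega⟩
  have hm : 1 ≤ m := by omega
  have hadd : Real.sinh ((m:ℝ) * x + x) =
      Real.sinh ((m:ℝ) * x) * Real.cosh x + Real.cosh ((m:ℝ) * x) * Real.sinh x :=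
    Real.sinh_add _ _
  have hsm : 0 < Real.sinh ((m:ℝ) * x) := Real.sinh_pos_iff.2 (by positivity)
  have hcx : 1 < Real.cosh x := Real.one_lt_cosh.2 hx.ne'
  have h1 : Real.sinh ((m:ℝ) * x) < Real.sinh ((m:ℝ) * x) * Real.cosh x := by nlinarith
  have h2 : Real.sinh x ≤ Real.cosh ((m:ℝ) * x) * Real.sinh x := by
    nlinarith [Real.one_le_cosh ((m:ℝ)*x), Real.sinh_pos_iff.2 hx]
  have ih := mul_sinh_le m hx
  push_cast
  calc ((m:ℝ) + 1) * Real.sinh x = (m:ℝ) * Real.sinh x + Real.sinh x := by ring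
  _ ≤ Real.sinh ((m:ℝ) * x) + Real.sinh x := by linarith
  _ < Real.sinh ((m:ℝ) * x) * Real.cosh x + Real.cosh ((m:ℝ) * x) * Real.sinh x := by linarith
  _ = Real.sinh (((m:ℝ) + 1) * x) := by rw [← hadd]; ring_nf

noncomputable def psiF (t : ℝ) : ℝ := (Real.exp t - 1)⁻¹
noncomputable def psi1F (t : ℝ) : ℝ := Real.exp t * ((Real.exp t - 1) ^ 2)⁻¹
noncomputable def psi2F (t : ℝ) : ℝ :=
  Real.exp t * (Real.exp t + 1) * ((Real.exp t - 1) ^ 3)⁻¹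

lemma exp_half_sq (t : ℝ) : Real.exp (t / 2) ^ 2 = Real.exp t := by
  rw [sq, ← Real.exp_add]; norm_num

lemma exp_sub_one_eq (t : ℝ) :
    Real.exp t - 1 = 2 * Real.exp (t / 2) * Real.sinh (t / 2) := by
  rw [Real.sinh_eq]
  have h1 := exp_half_sq t
  have h2 : Real.exp (t / 2) * Real.exp (-(t / 2)) = 1 := by rw [← Real.exp_add]; simp
  rw [sq] at h1
  linear_combination (-1 : ℝ) * h1 + h2

lemma exp_add_one_eq (t : ℝ) :
    Real.exp t + 1 = 2 * Real.exp (t / 2) * Real.cosh (t / 2) := by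
  rw [Real.cosh_eq]
  have h1 := exp_half_sq t
  have h2 : Real.exp (t / 2) * Real.exp (-(t / 2)) = 1 := by rw [← Real.exp_add]; simp
  rw [sq] at h1
  linear_combination (-1 : ℝ) * h1 - h2

lemma psi1F_eq {t : ℝ} (ht : 0 < t) : psi1F t = (4 * Real.sinh (t / 2) ^ 2)⁻¹ := by
  have hs : Real.sinh (t / 2) ≠ 0 := (Real.sinh_pos_iff.2 (by linarith)).ne'
  have key : (2 * Real.exp (t / 2) * Real.sinh (t / 2)) ^ 2
      = 4 * Real.exp t * Real.sinh (t / 2) ^ 2 := by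
    rw [← exp_half_sq t]; ring
  rw [psi1F, exp_sub_one_eq, key]
  have he := Real.exp_ne_zero t
  field_simp

lemma psi2F_eq {t : ℝ} (ht : 0 < t) : psi2F t = Real.cosh (t / 2) * (4 * Real.sinh (t / 2) ^ 3)⁻¹ := by
  have hs : Real.sinh (t / 2) ≠ 0 := (Real.sinh_pos_iff.2 (by linarith)).ne'
  have key : (2 * Real.exp (t / 2) * Real.sinh (t / 2)) ^ 3
      = 8 * Real.exp t * Real.exp (t / 2) * Real.sinh (t / 2) ^ 3 := by
    rw [← exp_half_sq t]; ring
  rw [psi2F, exp_sub_one_eq, exp_add_one_eq, key]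
  have he := Real.exp_ne_zero t
  have he2 := Real.exp_ne_zero (t / 2)
  field_simp
  ring

lemma term1_nonpos {k : ℕ} (hk : 1 ≤ k) {θ : ℝ} (hθ : 0 < θ) :
    (k : ℝ) ^ 2 * psi1F ((k : ℝ) * θ) ≤ psi1F θ := by
  have hkθ : 0 < (k : ℝ) * θ := by positivity
  have hx : 0 < θ / 2 := by linarith
  have hhalf : (k : ℝ) * θ / 2 = (k : ℝ) * (θ / 2) := by ring
  rw [psi1F_eq hθ, psi1F_eq hkθ, hhalf]
  set x := θ / 2
  set s := Real.sinh x with hs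
  set S := Real.sinh ((k : ℝ) * x) with hS
  have hspos : 0 < s := Real.sinh_pos_iff.2 hx
  have hSpos : 0 < S := Real.sinh_pos_iff.2 (by positivity)
  have hks : (k : ℝ) * s ≤ S := mul_sinh_le k hx
  rw [show (k:ℝ)^2 * (4 * S ^ 2)⁻¹ = (k:ℝ)^2 / (4 * S^2) by rw [div_eq_mul_inv],
    show (4 * s ^ 2)⁻¹ = 1 / (4 * s^2) by rw [one_div]]
  rw [div_le_div_iff₀ (by positivity) (by positivity)]
  nlinarith [mul_nonneg (Nat.cast_nonneg (α := ℝ) k) hspos.le]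

lemma term1_neg {k : ℕ} (hk : 2 ≤ k) {θ : ℝ} (hθ : 0 < θ) :
    (k : ℝ) ^ 2 * psi1F ((k : ℝ) * θ) < psi1F θ := by
  have hkθ : 0 < (k : ℝ) * θ := by positivity
  have hx : 0 < θ / 2 := by linarith
  have hhalf : (k : ℝ) * θ / 2 = (k : ℝ) * (θ / 2) := by ring
  rw [psi1F_eq hθ, psi1F_eq hkθ, hhalf]
  set x := θ / 2
  set s := Real.sinh x with hs
  set S := Real.sinh ((k : ℝ) * x) with hS
  have hspos : 0 < s := Real.sinh_pos_iff.2 hx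
  have hSpos : 0 < S := Real.sinh_pos_iff.2 (by positivity)
  have hks : (k : ℝ) * s < S := mul_sinh_lt hk hx
  rw [show (k:ℝ)^2 * (4 * S ^ 2)⁻¹ = (k:ℝ)^2 / (4 * S^2) by rw [div_eq_mul_inv],
    show (4 * s ^ 2)⁻¹ = 1 / (4 * s^2) by rw [one_div]]
  rw [div_lt_div_iff₀ (by positivity) (by positivity)]
  nlinarith [mul_nonneg (Nat.cast_nonneg (α := ℝ) k) hspos.le]

lemma term2_neg {k : ℕ} (hk : 2 ≤ k) {θ : ℝ} (hθ : 0 < θ) :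
    (k : ℝ) ^ 3 * psi2F ((k : ℝ) * θ) < psi2F θ := by
  have hkθ : 0 < (k : ℝ) * θ := by positivity
  have hx : 0 < θ / 2 := by linarith
  have hhalf : (k : ℝ) * θ / 2 = (k : ℝ) * (θ / 2) := by ring
  rw [psi2F_eq hθ, psi2F_eq hkθ, hhalf]
  set x := θ / 2 with hxdef
  have hxk : x < (k : ℝ) * x := by
    nlinarith [show (2:ℝ) ≤ (k:ℝ) by exact_mod_cast hk]
  have hQ := Q_strictAnti (Set.mem_Ioi.2 hx) (Set.mem_Ioi.2 (by positivity)) hxk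
  simp only at hQ
  set s := Real.sinh x with hs
  set S := Real.sinh ((k : ℝ) * x) with hS
  set c := Real.cosh x with hc
  set C := Real.cosh ((k : ℝ) * x) with hC
  have hspos : 0 < s := Real.sinh_pos_iff.2 hx
  have hSpos : 0 < S := Real.sinh_pos_iff.2 (by positivity)
  have hcpos : 0 < c := Real.cosh_pos x
  have hCpos : 0 < C := Real.cosh_pos _
  rw [div_lt_div_iff₀ (by positivity) (by positivity)] at hQ
  rw [show (k:ℝ)^3 * (C * (4 * S ^ 3)⁻¹) = ((k:ℝ)^3 * C) / (4 * S^3) by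
      rw [div_eq_mul_inv]; ring,
    show c * (4 * s ^ 3)⁻¹ = c / (4 * s^3) by rw [div_eq_mul_inv]]
  rw [div_lt_div_iff₀ (by positivity) (by positivity)]
  nlinarith [hQ, pow_pos hx 3]

lemma term2_nonneg {k : ℕ} (hk : 1 ≤ k) {θ : ℝ} (hθ : 0 < θ) :
    (k : ℝ) ^ 3 * psi2F ((k : ℝ) * θ) ≤ psi2F θ := by
  rcases eq_or_lt_of_le hk with h1 | h2
  · rw [← h1]; push_cast; rw [one_mul, one_pow, one_mul]
  · exact le_of_lt (term2_neg (by omega) hθ)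


lemma hasDerivAt_psiF {t : ℝ} (ht : 0 < t) : HasDerivAt psiF (-psi1F t) t := by
  have hne : Real.exp t - 1 ≠ 0 := by
    have : 1 < Real.exp t := Real.one_lt_exp_iff.2 ht
    linarith
  have h := ((Real.hasDerivAt_exp t).sub_const 1).fun_inv hne
  refine h.congr_deriv ?_
  rw [psi1F]
  field_simp

lemma hasDerivAt_psi1F {t : ℝ} (ht : 0 < t) : HasDerivAt psi1F (-psi2F t) t := by
  have hgt : 1 < Real.exp t := Real.one_lt_exp_iff.2 ht
  have hne : Real.exp t - 1 ≠ 0 := by linarith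
  have hinner := ((Real.hasDerivAt_exp t).sub_const 1).fun_pow 2
  have hinv := hinner.fun_inv (pow_ne_zero 2 hne)
  have h := (Real.hasDerivAt_exp t).fun_mul hinv
  refine h.congr_deriv ?_
  rw [psi2F]
  field_simp
  ring

noncomputable def HF (n : ℕ) : ℝ → ℝ := fun θ =>
  ∑ j ∈ Finset.range n, (psiF θ - ((j : ℝ) + 1) * psiF (((j : ℝ) + 1) * θ))

noncomputable def HF1 (n : ℕ) : ℝ → ℝ := fun θ =>
  ∑ j ∈ Finset.range n, (((j : ℝ) + 1) ^ 2 * psi1F (((j : ℝ) + 1) * θ) - psi1F θ)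

noncomputable def HF2 (n : ℕ) : ℝ → ℝ := fun θ =>
  ∑ j ∈ Finset.range n, (psi2F θ - ((j : ℝ) + 1) ^ 3 * psi2F (((j : ℝ) + 1) * θ))

lemma hasDerivAt_comp_const_mul {F F' : ℝ → ℝ} {c θ : ℝ} (h : HasDerivAt F (F' (c * θ)) (c * θ)) :
    HasDerivAt (fun θ => F (c * θ)) (c * F' (c * θ)) θ := by
  have hc : HasDerivAt (fun θ : ℝ => c * θ) c θ := by
    simpa using (hasDerivAt_id θ).const_mul c
  have := h.comp θ hc
  refine this.congr_deriv ?_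
  ring

lemma hasDerivAt_HF {n : ℕ} {θ : ℝ} (hθ : 0 < θ) : HasDerivAt (HF n) (HF1 n θ) θ := by
  apply HasDerivAt.fun_sum
  intro j _
  set c : ℝ := (j : ℝ) + 1 with hc
  have hcpos : 0 < c := by positivity
  have h1 : HasDerivAt (fun θ : ℝ => psiF (c * θ)) (c * -psi1F (c * θ)) θ :=
    hasDerivAt_comp_const_mul (F' := fun t => -psi1F t) (hasDerivAt_psiF (by positivity))
  have h := (hasDerivAt_psiF hθ).fun_sub ((h1.const_mul c))
  convert h using 1
  ring

lemma hasDerivAt_HF1 {n : ℕ} {θ : ℝ} (hθ : 0 < θ) : HasDerivAt (HF1 n) (HF2 n θ) θ := by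
  apply HasDerivAt.fun_sum
  intro j _
  set c : ℝ := (j : ℝ) + 1 with hc
  have hcpos : 0 < c := by positivity
  have h1 : HasDerivAt (fun θ : ℝ => psi1F (c * θ)) (c * -psi2F (c * θ)) θ :=
    hasDerivAt_comp_const_mul (F' := fun t => -psi2F t) (hasDerivAt_psi1F (by positivity))
  have h := (h1.const_mul (c ^ 2)).fun_sub (hasDerivAt_psi1F hθ)
  convert h using 1
  ring

lemma HF1_neg {n : ℕ} (hn : 2 ≤ n) {θ : ℝ} (hθ : 0 < θ) : HF1 n θ < 0 := by
  have key := Finset.sum_lt_sum (s := Finset.range n)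
    (f := fun j : ℕ => ((j : ℝ) + 1) ^ 2 * psi1F (((j : ℝ) + 1) * θ) - psi1F θ)
    (g := fun _ : ℕ => (0 : ℝ))
    (fun j _ => by
      have h := term1_nonpos (k := j + 1) (by omega) hθ
      push_cast at h
      beta_reduce
      linarith)
    ⟨1, Finset.mem_range.2 (by omega), by
      have h := term1_neg (k := 2) le_rfl hθ
      push_cast at h ⊢
      norm_num
      linarith⟩
  simpa [HF1] using key

lemma HF2_pos {n : ℕ} (hn : 2 ≤ n) {θ : ℝ} (hθ : 0 < θ) : 0 < HF2 n θ := by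
  have key := Finset.sum_lt_sum (s := Finset.range n)
    (f := fun _ : ℕ => (0 : ℝ))
    (g := fun j : ℕ => psi2F θ - ((j : ℝ) + 1) ^ 3 * psi2F (((j : ℝ) + 1) * θ))
    (fun j _ => by
      have h := term2_nonneg (k := j + 1) (by omega) hθ
      push_cast at h
      beta_reduce
      linarith)
    ⟨1, Finset.mem_range.2 (by omega), by
      have h := term2_neg (k := 2) le_rfl hθ
      push_cast at h ⊢
      norm_num
      linarith⟩
  simpa [HF2] using key

lemma HF_strictAntiOn {n : ℕ} (hn : 2 ≤ n) : StrictAntiOn (HF n) (Set.Ioi 0) := by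
  apply strictAntiOn_of_deriv_neg (convex_Ioi 0)
    (fun θ hθ => (hasDerivAt_HF hθ).continuousAt.continuousWithinAt)
  intro θ hθ
  rw [interior_Ioi] at hθ
  rw [(hasDerivAt_HF hθ).deriv]
  exact HF1_neg hn hθ

lemma HF_strictConvexOn {n : ℕ} (hn : 2 ≤ n) : StrictConvexOn ℝ (Set.Ioi 0) (HF n) := by
  apply strictConvexOn_of_deriv2_pos (convex_Ioi 0)
    (fun θ hθ => (hasDerivAt_HF hθ).continuousAt.continuousWithinAt)
  intro θ hθ
  rw [interior_Ioi] at hθ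
  have hev : deriv (HF n) =ᶠ[nhds θ] HF1 n := by
    filter_upwards [Ioi_mem_nhds hθ] with y hy
    exact (hasDerivAt_HF hy).deriv
  have : deriv (deriv (HF n)) θ = deriv (HF1 n) θ := hev.deriv_eq
  simp only [Function.iterate_succ, Function.iterate_zero, Function.comp_apply, id_eq]
  rw [this, (hasDerivAt_HF1 hθ).deriv]
  exact HF2_pos hn hθ

lemma inv_div_inv_sub_one {a : ℝ} (h0 : a ≠ 0) (h1 : a - 1 ≠ 0) :
    a⁻¹ / (a⁻¹ - 1) = 1 / (1 - a) := by
  have h2 : (1 : ℝ) - a ≠ 0 := by intro h; apply h1; linarith [sub_eq_zero.1 h]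
  field_simp

lemma term_logDeriv (j : ℕ) {θ : ℝ} (hθ : 0 < θ) :
    Real.exp (-θ) * logDeriv (fun x : ℝ => ∑ i ∈ Finset.range (j + 1), x ^ i) (Real.exp (-θ))
      = psiF θ - ((j : ℝ) + 1) * psiF (((j : ℝ) + 1) * θ) := by
  set q : ℝ := Real.exp (-θ) with hq
  have hq0 : 0 < q := Real.exp_pos _
  have hq1 : q < 1 := Real.exp_lt_one_iff.2 (by linarith)
  have hev : (fun x : ℝ => ∑ i ∈ Finset.range (j + 1), x ^ i)
      =ᶠ[nhds q] fun x => (x ^ (j + 1) - 1) / (x - 1) := by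
    filter_upwards [isOpen_ne.mem_nhds hq1.ne] with y hy
    exact geom_sum_eq hy (j + 1)
  have hld : logDeriv (fun x : ℝ => ∑ i ∈ Finset.range (j + 1), x ^ i) q
      = logDeriv (fun x : ℝ => (x ^ (j + 1) - 1) / (x - 1)) q := by
    rw [logDeriv_apply, logDeriv_apply, hev.deriv_eq, hev.eq_of_nhds]
  have hnum : (q : ℝ) ^ (j + 1) - 1 ≠ 0 := by
    have : q ^ (j + 1) < 1 := pow_lt_one₀ hq0.le hq1 (by omega)
    linarith
  have hden : q - 1 ≠ 0 := by linarith
  have hsplit : logDeriv (fun x : ℝ => (x ^ (j + 1) - 1) / (x - 1)) q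
      = logDeriv (fun x : ℝ => x ^ (j + 1) - 1) q - logDeriv (fun x : ℝ => x - 1) q := by
    exact logDeriv_div q hnum hden
      (((differentiable_pow (j + 1)).sub_const 1).differentiableAt)
      ((differentiable_id.sub_const 1).differentiableAt)
  have hd1 : logDeriv (fun x : ℝ => x ^ (j + 1) - 1) q
      = (((j : ℝ) + 1) * q ^ j) / (q ^ (j + 1) - 1) := by
    rw [logDeriv_apply, ((hasDerivAt_pow (j + 1) q).sub_const 1).deriv]
    push_cast
    norm_num
  have hd2 : logDeriv (fun x : ℝ => x - 1) q = 1 / (q - 1) := by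
    rw [logDeriv_apply, deriv_sub_const, deriv_id'']
  rw [hld, hsplit, hd1, hd2]
  set E : ℝ := Real.exp θ with hE
  have hE1 : 1 < E := Real.one_lt_exp_iff.2 hθ
  have hE0 : E ≠ 0 := by positivity
  have hqE : q = E⁻¹ := by rw [hq, hE, ← Real.exp_neg]
  have hEk : Real.exp (((j : ℝ) + 1) * θ) = E ^ (j + 1) := by
    rw [hE, ← Real.exp_nat_mul]
    push_cast
    norm_num
  have hpow : 1 < E ^ (j + 1) := one_lt_pow₀ hE1 (by omega)
  have hP0 : E ^ (j + 1) ≠ 0 := by positivity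
  have h1 : E - 1 ≠ 0 := by linarith
  have h2 : E ^ (j + 1) - 1 ≠ 0 := by linarith
  rw [psiF, psiF, hEk, hqE]
  have e1 : E⁻¹ * (((j : ℝ) + 1) * E⁻¹ ^ j / (E⁻¹ ^ (j + 1) - 1) - 1 / (E⁻¹ - 1))
      = ((j : ℝ) + 1) * ((E ^ (j + 1))⁻¹ / ((E ^ (j + 1))⁻¹ - 1)) - E⁻¹ / (E⁻¹ - 1) := by
    rw [inv_pow, inv_pow]
    ring
  rw [e1, inv_div_inv_sub_one hP0 h2, inv_div_inv_sub_one hE0 h1]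
  have r1 : (1 : ℝ) / (1 - E ^ (j + 1)) = -(E ^ (j + 1) - 1)⁻¹ := by
    rw [one_div, show (1 : ℝ) - E ^ (j + 1) = -(E ^ (j + 1) - 1) by ring, inv_neg]
  have r2 : (1 : ℝ) / (1 - E) = -(E - 1)⁻¹ := by
    rw [one_div, show (1 : ℝ) - E = -(E - 1) by ring, inv_neg]
  rw [r1, r2]
  ring

/-- the map `θ ↦ g(e^{−θ})` (the expected number of inversions under the
Mallows' φ model) is strictly decreasing and strictly convex on `(0, ∞)`; consequently its
inverse function — which is the map `m ↦ −log g⁻¹(m)` — is strictly decreasing and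
strictly convex on the range. -/
theorem mallows_mean_inversions_strictly_convex_decreasing
    (n : ℕ) (hn : 2 ≤ n)
    (f g h : ℝ → ℝ)
    (hf : ∀ q : ℝ, f q = ∑ π : Equiv.Perm (Fin n), q ^ numInv π)
    (hg : ∀ q : ℝ, g q = q * deriv f q / f q)
    (hh : ∀ θ : ℝ, h θ = g (Real.exp (-θ))) :
    StrictAntiOn h (Set.Ioi (0 : ℝ)) ∧
      StrictConvexOn ℝ (Set.Ioi (0 : ℝ)) h ∧
      ∀ hInv : ℝ → ℝ, (∀ θ ∈ Set.Ioi (0 : ℝ), hInv (h θ) = θ) →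
        StrictAntiOn hInv (h '' Set.Ioi (0 : ℝ)) ∧
          StrictConvexOn ℝ (h '' Set.Ioi (0 : ℝ)) hInv := by
  have hfF : f = fun x : ℝ => ∏ j ∈ Finset.range n, ∑ i ∈ Finset.range (j + 1), x ^ i :=
    funext fun x => by rw [hf x, sum_pow_numInv]
  have key : Set.EqOn h (HF n) (Set.Ioi 0) := by
    intro θ hθ
    rw [Set.mem_Ioi] at hθ
    set q := Real.exp (-θ) with hq
    have hq0 : 0 < q := Real.exp_pos _
    have hld : logDeriv f q
        = ∑ j ∈ Finset.range n,
            logDeriv (fun x : ℝ => ∑ i ∈ Finset.range (j + 1), x ^ i) q := by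
      rw [hfF]
      exact logDeriv_prod (s := Finset.range n)
        (f := fun j => fun x : ℝ => ∑ i ∈ Finset.range (j + 1), x ^ i) (x := q)
        (fun j _ => (Finset.sum_pos (fun i _ => pow_pos hq0 i)
          Finset.nonempty_range_add_one).ne')
        (fun j _ => (HasDerivAt.fun_sum (fun i _ => hasDerivAt_pow i q)).differentiableAt)
    have hstep : h θ = q * logDeriv f q := by
      rw [hh θ, hg q, logDeriv_apply, mul_div_assoc]
    rw [hstep, hld, Finset.mul_sum, HF]
    exact Finset.sum_congr rfl fun j _ => term_logDeriv j hθ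
  have hanti : StrictAntiOn h (Set.Ioi 0) := fun a ha b hb hab => by
    rw [key ha, key hb]; exact HF_strictAntiOn hn ha hb hab
  have hconv : StrictConvexOn ℝ (Set.Ioi 0) h := by
    refine ⟨convex_Ioi 0, ?_⟩
    intro x hx y hy hxy a b ha hb hab
    have hmem : a • x + b • y ∈ Set.Ioi (0 : ℝ) := (convex_Ioi 0) hx hy ha.le hb.le hab
    rw [key hx, key hy, key hmem]
    exact (HF_strictConvexOn hn).2 hx hy hxy ha hb hab
  refine ⟨hanti, hconv, ?_⟩
  intro hInv hInvSpec
  have hcont : ContinuousOn h (Set.Ioi 0) :=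
    ContinuousOn.congr
      (fun θ hθ => (hasDerivAt_HF hθ).continuousAt.continuousWithinAt) key
  have hcvximg : Convex ℝ (h '' Set.Ioi 0) :=
    Real.convex_iff_isPreconnected.2 ((isPreconnected_Ioi).image h hcont)
  have hInvAnti : StrictAntiOn hInv (h '' Set.Ioi 0) := by
    rintro y₁ ⟨θ₁, hθ₁, rfl⟩ y₂ ⟨θ₂, hθ₂, rfl⟩ hlt
    rw [hInvSpec θ₁ hθ₁, hInvSpec θ₂ hθ₂]
    by_contra hle
    push_neg at hle
    rcases eq_or_lt_of_le hle with hEq | hlt2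
    · rw [hEq] at hlt; exact lt_irrefl _ hlt
    · exact absurd (hanti hθ₁ hθ₂ hlt2) (not_lt.2 hlt.le)
  refine ⟨hInvAnti, hcvximg, ?_⟩
  rintro y₁ ⟨θ₁, hθ₁, rfl⟩ y₂ ⟨θ₂, hθ₂, rfl⟩ hne a b ha hb hab
  have hθne : θ₁ ≠ θ₂ := fun hEq => hne (by rw [hEq])
  have hmem : a • θ₁ + b • θ₂ ∈ Set.Ioi (0 : ℝ) := (convex_Ioi 0) hθ₁ hθ₂ ha.le hb.le hab
  have hcomb : h (a • θ₁ + b • θ₂) < a • h θ₁ + b • h θ₂ := hconv.2 hθ₁ hθ₂ hθne ha hb hab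
  have hmem2 : a • h θ₁ + b • h θ₂ ∈ h '' Set.Ioi 0 :=
    hcvximg (Set.mem_image_of_mem h hθ₁) (Set.mem_image_of_mem h hθ₂) ha.le hb.le hab
  have hmem3 : h (a • θ₁ + b • θ₂) ∈ h '' Set.Ioi 0 := Set.mem_image_of_mem h hmem
  have hfin := hInvAnti hmem3 hmem2 hcomb
  rw [hInvSpec _ hmem] at hfin
  rw [hInvSpec θ₁ hθ₁, hInvSpec θ₂ hθ₂]
  calc hInv (a • h θ₁ + b • h θ₂) < a • θ₁ + b • θ₂ := hfin
  _ = a • θ₁ + b • θ₂ := rfl
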